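/- Let (e_j) satisfy e_{j+1} ≤ (1 − 2α_j λ) e_j + α_j² U² for all j ≥ 0, with λ > 0, U > 0 and step size α_j = 1/(2λ(j+1)). Then e_N ≤ e_0/(N+1) + (U²/(4λ²)) · (log N + 2)/(N+1) for all N ≥ 1. -/

import Mathlib

theorem stmt_3 (e : ℕ → ℝ) (lam U : ℝ) (hlam : 0 < lam) (hU : 0 < U)
    (he : ∀ j, 0 ≤ e j)
    (α : ℕ → ℝ) (hα : ∀ j : ℕ, α j = 1 / (2 * lam * ((j : ℝ) + 1)))
    (hrec : ∀ j : ℕ, e (j + 1) ≤ (1 - 2 * α j * lam) * e j + (α j) ^ 2 * U ^ 2) :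
    ∀ N : ℕ, 1 ≤ N →
      e N ≤ e 0 / ((N : ℝ) + 1) + (U ^ 2 / (4 * lam ^ 2)) * (Real.log N + 2) / ((N : ℝ) + 1) := by
  set C : ℝ := U ^ 2 / (4 * lam ^ 2) with hC
  have hCpos : 0 < C := by positivity
  -- key: N * e N ≤ C * harmonic N
  have key : ∀ N : ℕ, (N : ℝ) * e N ≤ C * ((harmonic N : ℚ) : ℝ) := by
    intro N
    induction N with
    | zero => simp
    | succ n ih =>
      have hrecn := hrec n
      have hn1 : (0 : ℝ) < (n : ℝ) + 1 := by positivity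
      have hα' : α n = 1 / (2 * lam * ((n : ℝ) + 1)) := hα n
      have h1 : 1 - 2 * α n * lam = (n : ℝ) / ((n : ℝ) + 1) := by
        rw [hα']; field_simp; ring
      have h2 : (α n) ^ 2 * U ^ 2 = C / ((n : ℝ) + 1) ^ 2 := by
        rw [hα', hC]; field_simp; ring
      rw [h1, h2] at hrecn
      have hmul : ((n : ℝ) + 1) * e (n + 1) ≤ (n : ℝ) * e n + C / ((n : ℝ) + 1) := by
        have := mul_le_mul_of_nonneg_left hrecn (le_of_lt hn1)
        calc ((n : ℝ) + 1) * e (n + 1)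
            ≤ ((n : ℝ) + 1) * ((n : ℝ) / ((n : ℝ) + 1) * e n + C / ((n : ℝ) + 1) ^ 2) := this
          _ = (n : ℝ) * e n + C / ((n : ℝ) + 1) := by field_simp
      have hharm : ((harmonic (n + 1) : ℚ) : ℝ) = ((harmonic n : ℚ) : ℝ) + 1 / ((n : ℝ) + 1) := by
        rw [harmonic_succ]; push_cast; ring
      calc ((n + 1 : ℕ) : ℝ) * e (n + 1) = ((n : ℝ) + 1) * e (n + 1) := by push_cast; ring
        _ ≤ (n : ℝ) * e n + C / ((n : ℝ) + 1) := hmul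
        _ ≤ C * ((harmonic n : ℚ) : ℝ) + C / ((n : ℝ) + 1) := by linarith
        _ = C * ((harmonic (n + 1) : ℚ) : ℝ) := by rw [hharm]; ring
  -- harmonic N ≤ N
  have hHN : ∀ N : ℕ, ((harmonic N : ℚ) : ℝ) ≤ (N : ℝ) := by
    intro N
    induction N with
    | zero => simp
    | succ n ih =>
      have : ((harmonic (n + 1) : ℚ) : ℝ) = ((harmonic n : ℚ) : ℝ) + 1 / ((n : ℝ) + 1) := by
        rw [harmonic_succ]; push_cast; ring
      rw [this]
      have h1 : 1 / ((n : ℝ) + 1) ≤ 1 := by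
        rw [div_le_one (by positivity)]; linarith [Nat.cast_nonneg (α := ℝ) n]
      push_cast
      linarith
  intro N hN
  have hNpos : (0 : ℝ) < N := by exact_mod_cast hN
  have hN1 : (0 : ℝ) < (N : ℝ) + 1 := by linarith
  have hlog : ((harmonic N : ℚ) : ℝ) ≤ 1 + Real.log N := harmonic_le_one_add_log N
  have hkey := key N
  have hH := hHN N
  have he0 : 0 ≤ e 0 := he 0
  -- (N+1) * N * e N ≤ C * (N+1) * harmonic N ≤ C * N * (log N + 2)
  have hfinal : ((N : ℝ) + 1) * ((N : ℝ) * e N) ≤ C * (N : ℝ) * (Real.log N + 2) := by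
    have h1 : ((N : ℝ) + 1) * ((N : ℝ) * e N) ≤ ((N : ℝ) + 1) * (C * ((harmonic N : ℚ) : ℝ)) :=
      mul_le_mul_of_nonneg_left hkey (le_of_lt hN1)
    nlinarith [mul_le_mul_of_nonneg_left hlog (mul_pos hCpos hNpos).le, hCpos.le]
  rw [← add_div, le_div_iff₀ hN1]
  nlinarith [he N]
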